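/- arXiv:1401.5958 — 4 statements merged into one kernel-verified Lean document; each statement's English description precedes it below -/
import Mathlib

section
/- For all non-negative integers n and r, the value of the n-th Bernoulli polynomial at r satisfies B_n(r) = ∑_{j=0}^{n} (-1)^j * (j!/(j+1)) * S_r(n+r, j+r), where S_r denotes the r-Stirling number of the second kind and B_n(x) is defined by t e^{xt}/(e^t - 1) = ∑ B_n(x) t^n/n!. -/
/-- The unsigned `r`-Stirling number of the first kind. -/
def rStirling1 (r : ℕ) : ℕ → ℕ → ℕ
  | 0, k => if r = 0 ∧ k = 0 then 1 else 0
  | n + 1, k =>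
    if n + 1 < r then 0
    else if n + 1 = r then (if k = r then 1 else 0)
    else (if k = 0 then 0 else rStirling1 r n (k - 1)) + n * rStirling1 r n k

/-- The `r`-Stirling number of the second kind. -/
def rStirling2 (r : ℕ) : ℕ → ℕ → ℕ
  | 0, k => if r = 0 ∧ k = 0 then 1 else 0
  | n + 1, k =>
    if n + 1 < r then 0
    else if n + 1 = r then (if k = r then 1 else 0)
    else (if k = 0 then 0 else rStirling2 r n (k - 1)) + k * rStirling2 r n k

namespace RStirlingAux
open Finset

lemma rS2_lt (r : ℕ) : ∀ m k, k < r → rStirling2 r m k = 0 := by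
  intro m
  induction m with
  | zero => intro k hk; simp [rStirling2]; omega
  | succ n ih =>
    intro k hk
    rw [rStirling2]
    split
    · rfl
    · split
      · simp; omega
      · rw [ih k hk]
        rcases Nat.eq_zero_or_pos k with h | h
        · simp [h]
        · have : ¬ (k = 0) := by omega
          rw [if_neg this, ih (k-1) (by omega)]; ring

lemma rS2_gt (r : ℕ) : ∀ m k, m < k → rStirling2 r m k = 0 := by
  intro m
  induction m with
  | zero => intro k hk; simp [rStirling2]; omega
  | succ n ih =>
    intro k hk
    rw [rStirling2]
    split
    · rfl
    · split
      · simp; omega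
      · rw [ih k (by omega), if_neg (by omega), ih (k-1) (by omega)]; ring

/-- shifted r-Stirling number as a rational -/
def FF (r n j : ℕ) : ℚ := rStirling2 r (n + r) (j + r)

lemma FF_zero (r j : ℕ) : FF r 0 j = if j = 0 then 1 else 0 := by
  unfold FF
  cases r with
  | zero => simp [rStirling2]
  | succ s =>
    rw [zero_add, rStirling2, if_neg (by omega), if_pos rfl]
    by_cases h : j = 0 <;> simp [h]

lemma FF_succ_zero (r n : ℕ) : FF r (n + 1) 0 = r * FF r n 0 := by
  unfold FF
  rw [show n + 1 + r = (n + r) + 1 by ring, rStirling2, if_neg (by omega), if_neg (by omega)]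
  rcases Nat.eq_zero_or_pos r with h | h
  · simp [h]
  · rw [if_neg (by omega), rS2_lt r (n + r) (0 + r - 1) (by omega)]
    push_cast; ring

lemma FF_succ_succ (r n j : ℕ) :
    FF r (n + 1) (j + 1) = FF r n j + ((j : ℚ) + 1 + r) * FF r n (j + 1) := by
  unfold FF
  rw [show n + 1 + r = (n + r) + 1 by ring, rStirling2, if_neg (by omega), if_neg (by omega),
    if_neg (by omega), show j + 1 + r - 1 = j + r by omega]
  push_cast; ring

lemma FF_pow (r n : ℕ) : FF r n 0 = (r : ℚ) ^ n := by
  induction n with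
  | zero => rw [FF_zero]; simp
  | succ n ih => rw [FF_succ_zero, ih]; ring

lemma FF_vanish (r n j : ℕ) (h : n < j) : FF r n j = 0 := by
  unfold FF
  rw [rS2_gt r (n + r) (j + r) (by omega)]; rfl

def Ssum (r j m : ℕ) : ℚ := ∑ i ∈ range (j + 1), (-1) ^ i * (j.choose i) * ((i : ℚ) + r) ^ m

lemma choose_cast_mul (j i : ℕ) (hi : i ≤ j + 1) :
    ((j + 1).choose i : ℚ) * ((i : ℚ) - (j + 1)) = -((j : ℚ) + 1) * (j.choose i) := by
  have h := Nat.choose_mul_succ_eq j i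
  have h2 : ((j.choose i : ℚ)) * (j + 1) = ((j + 1).choose i : ℚ) * ((j + 1 : ℕ) - i : ℕ) := by
    exact_mod_cast congrArg (Nat.cast : ℕ → ℚ) h
  have h3 : (((j + 1 : ℕ) - i : ℕ) : ℚ) = ((j : ℚ) + 1) - i := by
    push_cast [Nat.cast_sub hi]; ring
  rw [h3] at h2
  nlinarith [h2]

lemma Ssum_rec (r j m : ℕ) :
    Ssum r (j + 1) (m + 1)
      = -((j : ℚ) + 1) * Ssum r j m + ((j : ℚ) + 1 + r) * Ssum r (j + 1) m := by
  have key : Ssum r (j + 1) (m + 1) - ((j : ℚ) + 1 + r) * Ssum r (j + 1) m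
      = -((j : ℚ) + 1) * Ssum r j m := by
    unfold Ssum
    rw [mul_sum, ← sum_sub_distrib]
    have step : ∀ i ∈ range (j + 2),
        (-1 : ℚ) ^ i * ((j+1).choose i) * ((i : ℚ) + r) ^ (m+1)
          - ((j : ℚ) + 1 + r) * ((-1) ^ i * ((j+1).choose i) * ((i : ℚ) + r) ^ m)
        = (-1) ^ i * (((j+1).choose i : ℚ) * ((i : ℚ) - (j + 1))) * ((i : ℚ) + r) ^ m := by
      intro i _
      ring
    rw [sum_congr rfl step]
    have step2 : ∀ i ∈ range (j + 2),
        (-1 : ℚ) ^ i * (((j+1).choose i : ℚ) * ((i : ℚ) - (j + 1))) * ((i : ℚ) + r) ^ m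
        = -((j : ℚ) + 1) * ((-1) ^ i * (j.choose i) * ((i : ℚ) + r) ^ m) := by
      intro i hi
      rw [choose_cast_mul j i (by simpa using Nat.lt_succ_iff.mp (mem_range.mp hi))]
      ring
    rw [sum_congr rfl step2, ← mul_sum, sum_range_succ]
    simp [Nat.choose_succ_self]
  linarith [key]

lemma Ssum_zero_m (r m : ℕ) : Ssum r 0 m = (r : ℚ) ^ m := by
  unfold Ssum; simp

lemma Ssum_j_zero (r j : ℕ) : Ssum r j 0 = if j = 0 then 1 else 0 := by
  unfold Ssum
  simp only [pow_zero, mul_one]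
  have : ∑ i ∈ range (j + 1), ((-1 : ℤ)) ^ i * (j.choose i) = if j = 0 then 1 else 0 :=
    Int.alternating_sum_range_choose
  exact_mod_cast this


lemma SF (r : ℕ) : ∀ n j, (-1 : ℚ) ^ j * (j.factorial : ℚ) * FF r n j = Ssum r j n := by
  intro n
  induction n with
  | zero =>
    intro j
    rw [Ssum_j_zero, FF_zero]
    by_cases h : j = 0 <;> simp [h]
  | succ n ih =>
    intro j
    cases j with
    | zero => simp [Ssum_zero_m, FF_pow]
    | succ j =>
      rw [Ssum_rec, ← ih j, ← ih (j + 1), FF_succ_succ]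
      rw [Nat.factorial_succ]
      push_cast
      ring


lemma Gsum (r : ℕ) : ∀ m, ∑ j ∈ range (m + 1), (-1 : ℚ) ^ j * j.factorial * FF r (m + 1) (j + 1)
    = ((m : ℚ) + 1) * (r : ℚ) ^ m := by
  intro m
  induction m with
  | zero =>
    rw [sum_range_one]
    rw [show (1 : ℕ) = 0 + 1 from rfl, FF_succ_succ, FF_zero, FF_zero]
    norm_num
  | succ m ih =>
    set g : ℕ → ℚ := fun j => (-1 : ℚ) ^ j * j.factorial * FF r (m + 1) j with hg
    have expand : ∑ j ∈ range (m + 2), (-1 : ℚ) ^ j * j.factorial * FF r (m + 2) (j + 1)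
        = ∑ j ∈ range (m + 2),
            (g j + (-g (j + 1)) + (r : ℚ) * ((-1 : ℚ) ^ j * j.factorial * FF r (m + 1) (j + 1))) := by
      refine sum_congr rfl fun j _ => ?_
      rw [show m + 2 = (m + 1) + 1 from rfl, FF_succ_succ]
      simp only [hg, Nat.factorial_succ]
      push_cast
      ring
    rw [expand, sum_add_distrib, sum_add_distrib, ← mul_sum]
    have hC : ∑ j ∈ range (m + 2), (-1 : ℚ) ^ j * j.factorial * FF r (m + 1) (j + 1)
        = ((m : ℚ) + 1) * (r : ℚ) ^ m := by
      rw [sum_range_succ, FF_vanish r (m + 1) (m + 2) (by omega), ih]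
      ring
    have hB : ∑ j ∈ range (m + 2), (-g (j + 1)) = -(∑ j ∈ range (m + 2), g j) + (r : ℚ) ^ (m + 1) := by
      rw [sum_neg_distrib]
      have h1 : ∑ j ∈ range (m + 2), g (j + 1) = ∑ j ∈ range (m + 3), g j - g 0 := by
        rw [sum_range_succ' g (m + 2)]; ring
      have h2 : ∑ j ∈ range (m + 3), g j = ∑ j ∈ range (m + 2), g j := by
        rw [sum_range_succ, hg]
        simp [FF_vanish r (m + 1) (m + 2) (by omega)]
      have h3 : g 0 = (r : ℚ) ^ (m + 1) := by simp [hg, FF_pow]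
      rw [h1, h2, h3]; ring
    rw [hB, hC]
    push_cast
    ring

lemma Ssum_pascal (r j m : ℕ) :
    Ssum r (j + 1) m
      = Ssum r j m - ∑ i ∈ range (j + 1), (-1 : ℚ) ^ i * (j.choose i) * ((i : ℚ) + 1 + r) ^ m := by
  unfold Ssum
  rw [sum_range_succ' (fun i => (-1 : ℚ) ^ i * ((j + 1).choose i) * ((i : ℚ) + r) ^ m) (j + 1)]
  have expand : ∀ i ∈ range (j + 1),
      (-1 : ℚ) ^ (i + 1) * ((j + 1).choose (i + 1)) * (((i : ℕ) + 1 : ℕ) + (r : ℚ)) ^ m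
      = (-1 : ℚ) ^ (i + 1) * (j.choose (i + 1)) * (((i + 1 : ℕ) : ℚ) + r) ^ m
        + -((-1 : ℚ) ^ i * (j.choose i) * ((i : ℚ) + 1 + r) ^ m) := by
    intro i _
    rw [Nat.choose_succ_succ]
    push_cast
    ring
  rw [sum_congr rfl expand, sum_add_distrib, sum_neg_distrib]
  have h1 : ∑ i ∈ range (j + 1),
        (-1 : ℚ) ^ (i + 1) * (j.choose (i + 1)) * (((i + 1 : ℕ) : ℚ) + r) ^ m
        + (-1 : ℚ) ^ 0 * (((j + 1).choose 0 : ℕ) : ℚ) * (((0 : ℕ) : ℚ) + r) ^ m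
      = ∑ i ∈ range (j + 1), (-1 : ℚ) ^ i * (j.choose i) * ((i : ℚ) + r) ^ m := by
    have := sum_range_succ' (fun i => (-1 : ℚ) ^ i * (j.choose i) * ((i : ℚ) + r) ^ m) (j + 1)
    rw [sum_range_succ] at this
    simp only [Nat.choose_succ_self] at this
    simp only [Nat.choose_zero_right] at this ⊢
    push_cast at this ⊢
    linarith [this]
  push_cast at h1 ⊢
  linarith [h1]

lemma binom_sum (n : ℕ) (y : ℚ) :
    ∑ k ∈ range (n + 1), ((n + 1).choose k : ℚ) * y ^ k = (y + 1) ^ (n + 1) - y ^ (n + 1) := by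
  have h := add_pow y 1 (n + 1)
  rw [sum_range_succ] at h
  simp only [one_pow, mul_one, Nat.choose_self, Nat.cast_one] at h
  rw [h, add_sub_cancel_right]
  exact sum_congr rfl fun k _ => by ring

lemma Bsum (r j n : ℕ) :
    ∑ k ∈ range (n + 1), ((n + 1).choose k : ℚ) * Ssum r j k = -Ssum r (j + 1) (n + 1) := by
  have step : ∑ k ∈ range (n + 1), ((n + 1).choose k : ℚ) * Ssum r j k
      = ∑ i ∈ range (j + 1), ((-1 : ℚ) ^ i * (j.choose i) * ((i : ℚ) + 1 + r) ^ (n + 1)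
          - (-1 : ℚ) ^ i * (j.choose i) * ((i : ℚ) + r) ^ (n + 1)) := by
    unfold Ssum
    simp only [mul_sum]
    rw [sum_comm]
    refine sum_congr rfl fun i _ => ?_
    have : ∑ k ∈ range (n + 1),
        ((n + 1).choose k : ℚ) * ((-1 : ℚ) ^ i * (j.choose i) * ((i : ℚ) + r) ^ k)
        = (-1 : ℚ) ^ i * (j.choose i)
            * ∑ k ∈ range (n + 1), ((n + 1).choose k : ℚ) * ((i : ℚ) + r) ^ k := by
      rw [mul_sum]
      exact sum_congr rfl fun k _ => by ring
    rw [this, binom_sum]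
    ring
  rw [step, sum_sub_distrib]
  have hp := Ssum_pascal r j (n + 1)
  unfold Ssum at hp ⊢
  linarith [hp]

noncomputable def Tsum (r k : ℕ) : ℚ := ∑ j ∈ range (k + 1), (-1 : ℚ) ^ j * ((j.factorial : ℚ) / (j + 1)) * FF r k j

lemma Tsum_ext (r k n : ℕ) (hk : k ≤ n) :
    Tsum r k = ∑ j ∈ range (n + 1), (-1 : ℚ) ^ j * ((j.factorial : ℚ) / (j + 1)) * FF r k j := by
  unfold Tsum
  refine sum_subset (range_subset_range.mpr (by omega)) fun j hj hj' => ?_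
  rw [FF_vanish r k j (by simp [mem_range] at hj hj'; omega)]
  ring

lemma L7 (r n : ℕ) :
    ∑ k ∈ range (n + 1), ((n + 1).choose k : ℚ) * Tsum r k = ((n : ℚ) + 1) * (r : ℚ) ^ n := by
  have step1 : ∑ k ∈ range (n + 1), ((n + 1).choose k : ℚ) * Tsum r k
      = ∑ j ∈ range (n + 1), ∑ k ∈ range (n + 1),
          ((n + 1).choose k : ℚ) * ((1 / ((j : ℚ) + 1)) * Ssum r j k) := by
    rw [sum_comm]
    refine sum_congr rfl fun k hk => ?_
    rw [Tsum_ext r k n (by simpa [Nat.lt_succ_iff] using mem_range.mp hk), mul_sum]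
    refine sum_congr rfl fun j _ => ?_
    rw [← SF r k j]
    ring
  rw [step1]
  have step2 : ∀ j ∈ range (n + 1),
      ∑ k ∈ range (n + 1), ((n + 1).choose k : ℚ) * ((1 / ((j : ℚ) + 1)) * Ssum r j k)
      = (-1 : ℚ) ^ j * j.factorial * FF r (n + 1) (j + 1) := by
    intro j _
    have : ∑ k ∈ range (n + 1), ((n + 1).choose k : ℚ) * ((1 / ((j : ℚ) + 1)) * Ssum r j k)
        = (1 / ((j : ℚ) + 1)) * ∑ k ∈ range (n + 1), ((n + 1).choose k : ℚ) * Ssum r j k := by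
      rw [mul_sum]; exact sum_congr rfl fun k _ => by ring
    rw [this, Bsum, ← SF r (n + 1) (j + 1), Nat.factorial_succ]
    have hj : ((j : ℚ) + 1) ≠ 0 := by positivity
    push_cast
    field_simp
    ring
  rw [sum_congr rfl step2, Gsum]

theorem final (n r : ℕ) : (Polynomial.bernoulli n).eval (r : ℚ) = Tsum r n := by
  induction n using Nat.strong_induction_on with
  | _ n ih =>
    have hb' : ∑ k ∈ range (n + 1), ((n + 1).choose k : ℚ) * (Polynomial.bernoulli k).eval (r : ℚ)
        = ((n : ℚ) + 1) * (r : ℚ) ^ n := by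
      have h := congrArg (Polynomial.eval (r : ℚ)) (Polynomial.sum_bernoulli n)
      rw [Polynomial.eval_finset_sum, Polynomial.eval_monomial] at h
      simp only [Polynomial.eval_smul, smul_eq_mul] at h
      rw [h]
    rw [sum_range_succ] at hb'
    have hl := L7 r n
    rw [sum_range_succ] at hl
    have heq : ∑ k ∈ range n, ((n + 1).choose k : ℚ) * (Polynomial.bernoulli k).eval (r : ℚ)
        = ∑ k ∈ range n, ((n + 1).choose k : ℚ) * Tsum r k :=
      sum_congr rfl fun k hk => by rw [ih k (mem_range.mp hk)]
    rw [heq] at hb'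
    have hcancel : ((n + 1).choose n : ℚ) * (Polynomial.bernoulli n).eval (r : ℚ)
        = ((n + 1).choose n : ℚ) * Tsum r n := by linarith
    have hpos : ((n + 1).choose n : ℚ) ≠ 0 := by
      simp [Nat.choose_succ_self_right]
      positivity
    exact mul_left_cancel₀ hpos hcancel

end RStirlingAux

theorem bernoulli_poly_eq_sum_rStirling2 (n r : ℕ) :
    (Polynomial.bernoulli n).eval (r : ℚ) =
      ∑ j ∈ Finset.range (n + 1),
        (-1 : ℚ) ^ j * ((j.factorial : ℚ) / (j + 1)) * rStirling2 r (n + r) (j + r) := by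
  simpa only [RStirlingAux.Tsum, RStirlingAux.FF] using RStirlingAux.final n r
end

section
/- For all non-negative integers n, r, k: the value of the Bernoulli polynomial of order -k at r satisfies B_n^{(-k)}(r) = C(n+k, k)^{-1} * S_r(n+r+k, k+r), where B_n^{(α)}(x) are the higher-order Bernoulli polynomials defined by (t/(e^t - 1))^α e^{xt} = ∑_{n≥0} B_n^{(α)}(x) t^n/n!, and S_r is the r-Stirling number of the second kind. Equivalently: n! times the coefficient of t^n in ((e^t - 1)/t)^k e^{rt} equals C(n+k, k)^{-1} * S_r(n+r+k, k+r). -/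
open Finset PowerSeries

lemma rStirling2_self (r j : ℕ) : rStirling2 r r j = if j = r then 1 else 0 := by
  cases r with
  | zero => simp [rStirling2]
  | succ m => simp [rStirling2]

lemma rStirling2_eq_zero (r : ℕ) : ∀ m j, j < r → rStirling2 r m j = 0 := by
  intro m
  induction m with
  | zero => intro j hj; simp [rStirling2]; omega
  | succ n ih =>
    intro j hj
    rw [rStirling2]
    rcases lt_trichotomy (n+1) r with h | h | h
    · simp [h]
    · simp [h]; omega
    · rw [if_neg (by omega), if_neg (by omega)]
      rcases Nat.eq_zero_or_pos j with hz | hz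
      · simp [hz, ih j hj]
      · rw [if_neg (by omega), ih j hj, ih (j-1) (by omega)]; ring

/-- The alternating-sum side of the explicit formula for `r`-Stirling numbers. -/
def Tsum (r n k : ℕ) : ℚ :=
  ∑ j ∈ Finset.range (k+1), (-1:ℚ)^(k-j) * (k.choose j) * ((j:ℚ)+r)^n

lemma choose_sub_mul (k' j : ℕ) (h : j ≤ k') :
    (k' + 1 - j) * (k'+1).choose j = (k'+1) * k'.choose j := by
  have h1 : (k'+1).choose j = (k'+1).choose (k'+1-j) := (Nat.choose_symm (by omega)).symm
  rw [h1, show k'+1-j = (k'-j)+1 by omega, mul_comm]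
  rw [← Nat.add_one_mul_choose_eq, Nat.choose_symm h]

lemma Tsum_rec (r n k' : ℕ) :
    Tsum r (n+1) (k'+1) = ((k':ℚ)+1+r) * Tsum r n (k'+1) + ((k':ℚ)+1) * Tsum r n k' := by
  have key : Tsum r (n+1) (k'+1) - ((k':ℚ)+1+r) * Tsum r n (k'+1)
      = ((k':ℚ)+1) * Tsum r n k' := by
    rw [Tsum, Tsum, Finset.mul_sum, ← Finset.sum_sub_distrib]
    rw [Finset.sum_range_succ]
    have : ∀ j ∈ Finset.range (k'+1),
        (-1:ℚ)^(k'+1-j) * ((k'+1).choose j) * ((j:ℚ)+r)^(n+1)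
          - ((k':ℚ)+1+r) * ((-1:ℚ)^(k'+1-j) * ((k'+1).choose j) * ((j:ℚ)+r)^n)
        = ((k':ℚ)+1) * ((-1:ℚ)^(k'-j) * (k'.choose j) * ((j:ℚ)+r)^n) := by
      intro j hj
      rw [Finset.mem_range] at hj
      have hj' : j ≤ k' := by omega
      have hc : ((k' + 1 - j : ℕ) : ℚ) * ((k'+1).choose j : ℚ)
          = ((k':ℚ)+1) * (k'.choose j : ℚ) := by
        exact_mod_cast congrArg (Nat.cast : ℕ → ℚ) (choose_sub_mul k' j hj')
      have hs : (k'+1-j) = (k'-j)+1 := by omega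
      have hcast : ((k' + 1 - j : ℕ) : ℚ) = (k':ℚ) + 1 - j := by
        push_cast [Nat.cast_sub (by omega : j ≤ k'+1)]; ring
      rw [hs, pow_succ]
      rw [hcast] at hc
      calc (-1:ℚ)^(k'-j) * (-1) * ((k'+1).choose j) * ((j:ℚ)+r)^(n+1)
            - ((k':ℚ)+1+r) * ((-1:ℚ)^(k'-j) * (-1) * ((k'+1).choose j) * ((j:ℚ)+r)^n)
          = (-1:ℚ)^(k'-j) * (((k':ℚ) + 1 - j) * ((k'+1).choose j)) * ((j:ℚ)+r)^n := by
            ring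
        _ = ((k':ℚ)+1) * ((-1:ℚ)^(k'-j) * (k'.choose j) * ((j:ℚ)+r)^n) := by
            rw [hc]; ring
    rw [Finset.sum_congr rfl this]
    have hz : (-1:ℚ)^(k'+1-(k'+1)) * (((k'+1).choose (k'+1) : ℕ):ℚ) * (((k'+1:ℕ):ℚ)+r)^(n+1)
        - ((k':ℚ)+1+r) * ((-1:ℚ)^(k'+1-(k'+1)) * (((k'+1).choose (k'+1) : ℕ):ℚ) * (((k'+1:ℕ):ℚ)+r)^n) = 0 := by
      simp; push_cast; ring
    push_cast at hz ⊢
    rw [hz, add_zero, Tsum, Finset.mul_sum]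
  linarith [key]

/-- The explicit (alternating-sum) formula for `r`-Stirling numbers of the second kind. -/
lemma factorial_mul_rStirling2 (r : ℕ) :
    ∀ n k, (k.factorial : ℚ) * rStirling2 r (n + r) (k + r) = Tsum r n k := by
  intro n
  induction n with
  | zero =>
    intro k
    rw [Nat.zero_add, rStirling2_self]
    have hTs : Tsum r 0 k = if k = 0 then 1 else 0 := by
      rw [Tsum]
      have hq : (∑ m ∈ range (k + 1), ((-1:ℚ) ^ m * k.choose m)) = if k = 0 then 1 else 0 := by
        rcases eq_or_ne k 0 with hk | hk
        · simp [hk]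
        · rw [if_neg hk]
          exact_mod_cast congrArg (fun z : ℤ => (z : ℚ))
            (Int.alternating_sum_range_choose_of_ne hk)
      rw [← Finset.sum_range_reflect] at hq
      rw [← hq]
      apply Finset.sum_congr rfl
      intro j hj
      rw [Finset.mem_range] at hj
      rw [show k + 1 - 1 - j = k - j by omega,
        Nat.choose_symm (by omega : j ≤ k)]
      ring
    rw [hTs]
    rcases eq_or_ne k 0 with hk | hk
    · simp [hk]
    · rw [if_neg hk, if_neg (by omega : ¬ k + r = r)]
      simp
  | succ n ih =>
    intro k
    cases k with
    | zero =>
      have h1 : rStirling2 r (n + 1 + r) r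
          = (if r = 0 then 0 else rStirling2 r (n + r) (r - 1)) + r * rStirling2 r (n + r) r := by
        rw [show n + 1 + r = (n + r) + 1 by ring, rStirling2,
          if_neg (by omega), if_neg (by omega)]
      have h2 : (if r = 0 then 0 else rStirling2 r (n + r) (r - 1)) = 0 := by
        split
        · rfl
        · exact rStirling2_eq_zero r _ _ (by omega)
      have h3 := ih 0
      simp only [Nat.factorial_zero, Nat.cast_one, one_mul, Nat.zero_add] at h3 ⊢
      rw [h1, h2, Nat.zero_add, Tsum]
      push_cast
      rw [h3]
      simp [Tsum, pow_succ]
      ring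
    | succ k' =>
      have h1 : rStirling2 r (n + 1 + r) (k' + 1 + r)
          = rStirling2 r (n + r) (k' + r) + (k' + 1 + r) * rStirling2 r (n + r) (k' + 1 + r) := by
        rw [show n + 1 + r = (n + r) + 1 by ring, rStirling2,
          if_neg (by omega), if_neg (by omega), if_neg (by omega)]
        congr 2
        omega
      rw [h1, Tsum_rec]
      have i1 := ih (k' + 1)
      have i2 := ih k'
      have hf : ((k'+1).factorial : ℚ) = (k'+1) * (k'.factorial : ℚ) := by
        push_cast [Nat.factorial_succ]; ring
      push_cast [hf] at *
      rw [← i1, ← i2]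
      ring

lemma mk_eq_rescale_exp (r : ℕ) :
    (PowerSeries.mk fun i => (r : ℚ) ^ i / i.factorial)
      = PowerSeries.rescale (r : ℚ) (PowerSeries.exp ℚ) := by
  ext i
  simp [PowerSeries.coeff_rescale, PowerSeries.coeff_exp, div_eq_mul_inv]

lemma X_mul_mk :
    PowerSeries.X * (PowerSeries.mk fun i => (1 : ℚ) / (i + 1).factorial)
      = PowerSeries.exp ℚ - 1 := by
  ext i
  cases i with
  | zero => simp [PowerSeries.coeff_exp]
  | succ m =>
    simp [PowerSeries.coeff_succ_X_mul, PowerSeries.coeff_exp,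
      PowerSeries.coeff_one, div_eq_mul_inv]

lemma coeff_exp_sub_one_pow_mul (r k m : ℕ) :
    PowerSeries.coeff (R := ℚ) m ((PowerSeries.exp ℚ - 1) ^ k * PowerSeries.rescale (r : ℚ) (PowerSeries.exp ℚ))
      = (1 / m.factorial) * Tsum r m k := by
  have hsum : (PowerSeries.exp ℚ - 1) ^ k * PowerSeries.rescale (r : ℚ) (PowerSeries.exp ℚ)
      = ∑ j ∈ Finset.range (k+1),
          PowerSeries.C (R := ℚ) ((-1:ℚ)^(k-j) * (k.choose j)) *
            PowerSeries.rescale ((j : ℚ) + r) (PowerSeries.exp ℚ) := by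
    rw [sub_pow, Finset.sum_mul]
    apply Finset.sum_congr rfl
    intro j hj
    rw [Finset.mem_range] at hj
    have hsign : (-1 : ℚ⟦X⟧) ^ (j + k) = PowerSeries.C (R := ℚ) ((-1:ℚ)^(k-j)) := by
      rw [show j + k = (k - j) + 2*j by omega, pow_add, pow_mul]
      simp [map_pow]
    rw [one_pow, PowerSeries.exp_pow_eq_rescale_exp, hsign, mul_one,
      show ((k.choose j : ℕ) : ℚ⟦X⟧) = PowerSeries.C (R := ℚ) ((k.choose j : ℕ) : ℚ) by
        simp only [map_natCast]]
    rw [map_mul, ← PowerSeries.exp_mul_exp_eq_exp_add ((j:ℕ):ℚ) (r:ℚ)]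
    ring
  rw [hsum, map_sum, Tsum, Finset.mul_sum]
  apply Finset.sum_congr rfl
  intro j hj
  rw [PowerSeries.coeff_C_mul, PowerSeries.coeff_rescale, PowerSeries.coeff_exp]
  simp only [Algebra.algebraMap_self, RingHom.id_apply]
  ring

theorem negOrder_bernoulli_eq_rStirling2 (n r k : ℕ) :
    (n.factorial : ℚ) * PowerSeries.coeff (R := ℚ) n
        ((PowerSeries.mk fun i => (1 : ℚ) / (i + 1).factorial) ^ k *
          PowerSeries.mk fun i => (r : ℚ) ^ i / i.factorial)
      = (((n + k).choose k : ℚ))⁻¹ * rStirling2 r (n + r + k) (k + r) := by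
  have hA : PowerSeries.coeff (R := ℚ) n
        ((PowerSeries.mk fun i => (1 : ℚ) / (i + 1).factorial) ^ k *
          PowerSeries.mk fun i => (r : ℚ) ^ i / i.factorial)
      = PowerSeries.coeff (R := ℚ) (n + k)
          ((PowerSeries.exp ℚ - 1) ^ k * PowerSeries.rescale (r : ℚ) (PowerSeries.exp ℚ)) := by
    rw [← X_mul_mk, ← mk_eq_rescale_exp, mul_pow, mul_assoc,
      PowerSeries.coeff_X_pow_mul]
  rw [hA, coeff_exp_sub_one_pow_mul]
  have hS := factorial_mul_rStirling2 r (n + k) k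
  rw [show n + k + r = n + r + k by ring] at hS
  rw [← hS]
  have hch : ((n + k).choose k : ℚ) = ((n+k).factorial : ℚ) / (k.factorial * n.factorial) := by
    rw [Nat.cast_choose ℚ (by omega : k ≤ n + k)]
    congr 2
    rw [Nat.add_sub_cancel]
  rw [hch]
  have h1 : ((n+k).factorial : ℚ) ≠ 0 := Nat.cast_ne_zero.mpr (Nat.factorial_ne_zero _)
  have h2 : (k.factorial : ℚ) ≠ 0 := Nat.cast_ne_zero.mpr (Nat.factorial_ne_zero _)
  have h3 : (n.factorial : ℚ) ≠ 0 := Nat.cast_ne_zero.mpr (Nat.factorial_ne_zero _)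
  field_simp
end

section
/- (Melzak's formula.) Let f be a polynomial of degree at most p over ℚ (or any field of characteristic zero), let α be a scalar such that α + j ≠ 0 for j = 0, 1, ..., p, and let x be a scalar. Then f(α + x) = α * C(α+p, p) * ∑_{j=0}^{p} ((-1)^j / (α+j)) * C(p, j) * f(x - j), where C(α+p, p) = (α+p)(α+p-1)⋯(α+1)/p! is the generalized binomial coefficient. -/
open Polynomial Finset

section Aux

variable {K : Type*} [Field K] [CharZero K]

/-- descPochhammer as a product. -/
lemma descPoch_eval_prod (n : ℕ) (y : K) :
    (descPochhammer K n).eval y = ∏ i ∈ Finset.range n, (y - i) := by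
  induction n with
  | zero => simp
  | succ n ih => rw [descPochhammer_succ_eval, ih, Finset.prod_range_succ]

/-- Partial fraction identity: ∑ (-1)^j C(p,j)/(α+j) = p! / ∏ (α+j). -/
lemma partial_frac (p : ℕ) : ∀ α : K, (∀ j : ℕ, j ≤ p → α + j ≠ 0) →
    ∑ j ∈ Finset.range (p + 1), (-1 : K) ^ j * (p.choose j : K) / (α + j)
      = (p.factorial : K) / ∏ j ∈ Finset.range (p + 1), (α + j) := by
  induction p with
  | zero => intro α hα; simp
  | succ p ih =>
    intro α hα
    have h0 : α ≠ 0 := by simpa using hα 0 (Nat.zero_le _)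
    have hstep : ∑ j ∈ Finset.range (p + 2), (-1 : K) ^ j * ((p+1).choose j : K) / (α + j)
        = (∑ j ∈ Finset.range (p + 1), (-1 : K) ^ j * (p.choose j : K) / (α + j))
          - ∑ j ∈ Finset.range (p + 1), (-1 : K) ^ j * (p.choose j : K) / ((α + 1) + j) := by
      rw [Finset.sum_range_succ' (fun j => (-1 : K) ^ j * ((p+1).choose j : K) / (α + j))]
      have e1 : ∀ j ∈ Finset.range (p + 1),
          (-1 : K) ^ (j+1) * ((p+1).choose (j+1) : K) / (α + ↑(j+1))
          = -((-1 : K) ^ j * (p.choose j : K) / ((α + 1) + j))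
            - (-1 : K) ^ j * (p.choose (j+1) : K) / (α + ↑(j+1)) := by
        intro j _
        push_cast [Nat.choose_succ_succ]
        ring
      rw [Finset.sum_congr rfl e1, Finset.sum_sub_distrib]
      -- rewrite target RHS: peel first term of S(p, α)
      have e3 : ∑ j ∈ Finset.range (p + 1), (-1 : K) ^ j * (p.choose j : K) / (α + j)
          = (∑ j ∈ Finset.range p, (-1 : K) ^ (j+1) * (p.choose (j+1) : K) / (α + ↑(j+1))) + 1/α := by
        rw [Finset.sum_range_succ' (fun j => (-1 : K) ^ j * (p.choose j : K) / (α + j))]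
        simp
      have e4 : ∑ j ∈ Finset.range (p + 1), (-1 : K) ^ j * (p.choose (j+1) : K) / (α + ↑(j+1))
          = ∑ j ∈ Finset.range p, (-1 : K) ^ j * (p.choose (j+1) : K) / (α + ↑(j+1)) := by
        rw [Finset.sum_range_succ]
        simp [Nat.choose_succ_self]
      rw [e4, e3]
      have e5 : ∑ j ∈ Finset.range p, (-1 : K) ^ (j+1) * (p.choose (j+1) : K) / (α + ↑(j+1))
          = - ∑ j ∈ Finset.range p, (-1 : K) ^ j * (p.choose (j+1) : K) / (α + ↑(j+1)) := by
        rw [← Finset.sum_neg_distrib]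
        apply Finset.sum_congr rfl
        intro j _
        rw [pow_succ]
        ring
      rw [e5, Finset.sum_neg_distrib]
      simp only [pow_zero, Nat.choose_zero_right, Nat.cast_one, Nat.cast_zero, add_zero,
        one_mul]
      ring
    have hα1 : ∀ j : ℕ, j ≤ p → (α + 1) + (j : K) ≠ 0 := by
      intro j hj hcon
      have := hα (j+1) (by omega)
      push_cast at this
      apply this
      linear_combination hcon
    have hαp : ∀ j : ℕ, j ≤ p → α + (j : K) ≠ 0 := fun j hj => hα j (by omega)
    rw [hstep, ih α hαp, ih (α + 1) hα1]
    -- now pure algebra with products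
    set M : K := ∏ i ∈ Finset.range p, ((α + 1) + i) with hM
    have hA : ∏ j ∈ Finset.range (p + 1), (α + j) = M * α := by
      rw [Finset.prod_range_succ' (fun j => α + (j : K))]
      simp only [Nat.cast_zero, add_zero]
      congr 1
      apply Finset.prod_congr rfl
      intro i _
      push_cast
      ring
    have hB : ∏ j ∈ Finset.range (p + 1), ((α + 1) + j) = M * ((α + 1) + p) := by
      rw [Finset.prod_range_succ]
    have hC : ∏ j ∈ Finset.range (p + 2), (α + j) = M * α * ((α + 1) + p) := by
      rw [Finset.prod_range_succ, hA]
      push_cast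
      ring
    have hMne : M ≠ 0 := by
      apply Finset.prod_ne_zero_iff.mpr
      intro i hi
      exact hα1 i (Nat.le_of_lt (Finset.mem_range.mp hi))
    have hpne : (α + 1) + (p : K) ≠ 0 := hα1 p le_rfl
    rw [hA, hB, hC]
    rw [Nat.factorial_succ]
    push_cast
    field_simp
    ring
  
/-- p-th finite difference of a polynomial of degree < p vanishes (iterated form). -/
lemma fwdDiff_poly_zero : ∀ (p : ℕ) (Q : K[X]), Q.degree < p →
    (fwdDiff (1 : K))^[p] (fun t => Q.eval t) = 0 := by
  intro p
  induction p with
  | zero =>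
    intro Q hQ
    have : Q = 0 := degree_eq_bot.mp (Nat.WithBot.lt_zero_iff.mp (by simpa using hQ))
    subst this
    funext t
    simp
  | succ p ih =>
    intro Q hQ
    rw [Function.iterate_succ_apply]
    have hd : fwdDiff (1 : K) (fun t => Q.eval t)
        = fun t => (Q.comp (X + C 1) - Q).eval t := by
      funext t
      simp [fwdDiff, eval_comp]
    rw [hd]
    apply ih
    rcases eq_or_ne Q 0 with h | h
    · subst h
      simp only [zero_comp, sub_zero, degree_zero]
      exact WithBot.bot_lt_coe p
    · have htinj : ∀ Q' : K[X], Polynomial.taylor (1:K) Q' = 0 → Q' = 0 := by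
        intro Q' hz
        have h2 := congrArg (Polynomial.taylor (-1:K)) hz
        rwa [taylor_taylor, neg_add_cancel, taylor_zero', LinearMap.id_apply, map_zero] at h2
      have hcne : Q.comp (X + C 1) ≠ 0 := by
        intro hz
        exact h (htinj Q (by rwa [taylor_apply]))
      have hcomp_deg : (Q.comp (X + C 1)).degree = Q.degree := by
        have h2 : (Polynomial.taylor (1:K) Q).natDegree = Q.natDegree := natDegree_taylor Q 1
        rw [degree_eq_natDegree hcne, degree_eq_natDegree h, ← taylor_apply, h2]
      have hlc : (Q.comp (X + C 1)).leadingCoeff = Q.leadingCoeff := by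
        rw [leadingCoeff_comp (by rw [natDegree_X_add_C]; exact one_ne_zero)]
        rw [leadingCoeff_X_add_C, one_pow, mul_one]
      have hsub : (Q.comp (X + C 1) - Q).degree < Q.degree := by
        have h3 := degree_sub_lt hcomp_deg hcne hlc
        rwa [hcomp_deg] at h3
      calc (Q.comp (X + C 1) - Q).degree < Q.degree := hsub
        _ ≤ (p : WithBot ℕ) := by
          have hn : Q.natDegree < p + 1 := (natDegree_lt_iff_degree_lt h).mpr (by exact_mod_cast hQ)
          exact degree_le_natDegree.trans (by exact_mod_cast Nat.lt_succ_iff.mp hn)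

/-- p-th finite difference in sum form. -/
lemma sum_fwdDiff_zero (p : ℕ) (Q : K[X]) (hQ : Q.degree < p) :
    ∑ j ∈ Finset.range (p + 1), (-1 : K) ^ j * (p.choose j : K) * Q.eval (j : K) = 0 := by
  have h := fwdDiff_poly_zero p Q hQ
  have h2 := fwdDiff_iter_eq_sum_shift (1 : K) (fun t => Q.eval t) p 0
  rw [h] at h2
  have h3 : (0 : K) = ∑ k ∈ Finset.range (p + 1),
      ((-1 : ℤ) ^ (p - k) * (p.choose k : ℤ)) • Q.eval (0 + k • (1:K)) := by
    simpa using h2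
  have h4 : ∑ k ∈ Finset.range (p + 1), (-1 : K) ^ (p - k) * (p.choose k : K) * Q.eval (k : K) = 0 := by
    refine Eq.trans (Finset.sum_congr rfl ?_) h3.symm
    intro k _
    simp only [zero_add, nsmul_eq_mul, mul_one, zsmul_eq_mul]
    push_cast
    ring
  have h5 : ∑ j ∈ Finset.range (p + 1), (-1 : K) ^ j * (p.choose j : K) * Q.eval (j : K)
      = (-1 : K) ^ p * ∑ k ∈ Finset.range (p + 1), (-1 : K) ^ (p - k) * (p.choose k : K) * Q.eval (k : K) := by
    rw [Finset.mul_sum]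
    apply Finset.sum_congr rfl
    intro k hk
    have hkp : k ≤ p := Nat.lt_succ_iff.mp (Finset.mem_range.mp hk)
    have : (-1 : K) ^ p * (-1 : K) ^ (p - k) = (-1 : K) ^ k := by
      rw [← pow_add]
      have : p + (p - k) = 2 * (p - k) + k := by omega
      rw [this, pow_add, pow_mul]
      norm_num
    rw [← mul_assoc, ← mul_assoc, this]
  rw [h5, h4, mul_zero]

end Aux

theorem melzak_formula {K : Type*} [Field K] [CharZero K] (p : ℕ) (f : Polynomial K)
    (hf : f.degree ≤ p) (α x : K) (hα : ∀ j : ℕ, j ≤ p → α + j ≠ 0) :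
    f.eval (α + x) =
      α * ((descPochhammer K p).eval (α + p) / p.factorial) *
        ∑ j ∈ Finset.range (p + 1),
          ((-1) ^ j / (α + j)) * (p.choose j : K) * f.eval (x - j) := by
  classical
  set c : K := f.eval (α + x) with hc
  -- g(t) = f(x - t)
  set g : K[X] := f.comp (C x - X) with hg
  have hg_eval : ∀ t : K, g.eval t = f.eval (x - t) := by
    intro t; simp [hg, eval_comp]
  have hg_deg : g.degree ≤ p := by
    rcases eq_or_ne f 0 with h | h
    · simp [hg, h]
    · have hgd : g.natDegree = f.natDegree := by
        rw [hg, natDegree_comp]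
        have : (C x - X : K[X]).natDegree = 1 := by
          rw [show (C x - X : K[X]) = -(X - C x) by ring, natDegree_neg, natDegree_X_sub_C]
        rw [this, mul_one]
      calc g.degree ≤ g.natDegree := degree_le_natDegree
        _ = f.natDegree := by exact_mod_cast hgd
        _ ≤ p := by
          exact_mod_cast (natDegree_le_iff_degree_le.mpr hf)
  -- g(-α) = c
  have hgroot : (g - C c).IsRoot (-α) := by
    simp [IsRoot, hg_eval, hc]
    ring_nf
  obtain ⟨Q, hQ⟩ := dvd_iff_isRoot.mpr hgroot
  -- g - C c = (X - C (-α)) * Q, i.e. g = C c + (X + C α) Q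
  have hQdeg : Q.degree < p := by
    rcases eq_or_ne Q 0 with h | h
    · rw [h, degree_zero]; exact WithBot.bot_lt_coe p
    · have hne : g - C c ≠ 0 := by
        rw [hQ]
        exact mul_ne_zero (X_sub_C_ne_zero (-α)) h
      have hdeg1 : (g - C c).degree = 1 + Q.degree := by
        rw [hQ, degree_mul, degree_X_sub_C]
      have hdeg2 : (g - C c).degree ≤ p := by
        apply le_trans (degree_sub_le _ _)
        apply max_le hg_deg
        apply le_trans degree_C_le
        exact_mod_cast Nat.cast_nonneg' p
      rw [degree_eq_natDegree h]
      rw [hdeg1, degree_eq_natDegree h] at hdeg2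
      have : ((1 + Q.natDegree : ℕ) : WithBot ℕ) ≤ (p : WithBot ℕ) := by
        push_cast
        convert hdeg2 using 1
      have h2 : 1 + Q.natDegree ≤ p := by exact_mod_cast this
      exact_mod_cast Nat.lt_of_lt_of_le (Nat.lt_succ_self _) (by omega : Q.natDegree + 1 ≤ p)
  have hfeval : ∀ j : ℕ, j ≤ p → f.eval (x - j) = c + (α + j) * Q.eval (j : K) := by
    intro j hj
    have := congrArg (Polynomial.eval (j : K)) hQ
    simp only [eval_sub, eval_mul, eval_X, eval_C] at this
    rw [hg_eval] at this
    rw [show f.eval (x - j) = (f.eval (x - j) - c) + c by ring, this]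
    ring
  -- rewrite the sum
  have hsum : ∑ j ∈ Finset.range (p + 1), ((-1:K) ^ j / (α + j)) * (p.choose j : K) * f.eval (x - j)
      = c * ((p.factorial : K) / ∏ j ∈ Finset.range (p + 1), (α + j)) := by
    have step : ∀ j ∈ Finset.range (p + 1),
        ((-1:K) ^ j / (α + j)) * (p.choose j : K) * f.eval (x - j)
        = c * ((-1:K) ^ j * (p.choose j : K) / (α + j))
          + (-1:K) ^ j * (p.choose j : K) * Q.eval (j : K) := by
      intro j hj
      have hjp : j ≤ p := Nat.lt_succ_iff.mp (Finset.mem_range.mp hj)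
      have hne : α + (j : K) ≠ 0 := hα j hjp
      rw [hfeval j hjp]
      field_simp
    rw [Finset.sum_congr rfl step, Finset.sum_add_distrib, ← Finset.mul_sum,
      partial_frac p α hα, sum_fwdDiff_zero p Q hQdeg, add_zero]
  rw [hsum]
  -- final algebra: α * (D/p!) * (c * p!/P) = c where P = α * D
  have hdesc : (descPochhammer K p).eval (α + p) = ∏ i ∈ Finset.range p, (α + 1 + i) := by
    rw [descPoch_eval_prod]
    rw [← Finset.prod_range_reflect]
    apply Finset.prod_congr rfl
    intro i hi
    have hip : i < p := Finset.mem_range.mp hi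
    rw [Nat.cast_sub (by omega : i ≤ p - 1), Nat.cast_sub (by omega : 1 ≤ p)]
    push_cast
    ring
  have hP : ∏ j ∈ Finset.range (p + 1), (α + j) = α * ∏ i ∈ Finset.range p, (α + 1 + i) := by
    rw [Finset.prod_range_succ' (fun j => α + (j : K))]
    simp only [Nat.cast_zero, add_zero]
    rw [mul_comm]
    congr 1
    apply Finset.prod_congr rfl
    intro i _
    push_cast
    ring
  have hprod_ne : ∏ i ∈ Finset.range p, (α + 1 + i) ≠ 0 := by
    apply Finset.prod_ne_zero_iff.mpr
    intro i hi hcon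
    have h1 := hα (i + 1) (Nat.succ_le_of_lt (Finset.mem_range.mp hi))
    push_cast at h1
    exact h1 (by linear_combination hcon)
  have hα0 : α ≠ 0 := by simpa using hα 0 (Nat.zero_le _)
  have hfac : (p.factorial : K) ≠ 0 := by
    exact_mod_cast Nat.cast_ne_zero.mpr p.factorial_ne_zero
  rw [hdesc, hP]
  field_simp
end

section
/- For all integers n ≥ 1 and all natural numbers r, the n-th ordinary Bernoulli polynomial evaluated at -r satisfies B_n(-r) = n * ∑_{j=0}^{n} ((-1)^{n+j} / (n+j)) * C(2n, n+j) * s_{r+1}(n+r+j+1, r+j+1), where s_{r+1} denotes the unsigned (r+1)-Stirling number of the first kind. -/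
namespace BPAux


/-- `Ee r i n` is the elementary symmetric function `e_n(r+1, ..., r+i)`. -/
def Ee (r : ℕ) : ℕ → ℕ → ℚ
  | 0, 0 => 1
  | 0, _+1 => 0
  | i+1, 0 => Ee r i 0
  | i+1, n+1 => Ee r i (n+1) + ((r:ℚ)+1+i) * Ee r i n

@[simp] lemma Ee_zero_right (r i : ℕ) : Ee r i 0 = 1 := by
  induction i with
  | zero => rfl
  | succ i ih => rw [Ee, ih]

lemma Ee_eq_zero (r : ℕ) : ∀ {i n : ℕ}, i < n → Ee r i n = 0 := by
  intro i
  induction i with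
  | zero => intro n hn; match n, hn with | (m+1), _ => rfl
  | succ i ih =>
    intro n hn
    match n, hn with
    | (m+1), hn =>
      rw [Ee, ih (by omega), ih (by omega)]
      ring

/-- power sums of consecutive values -/
def Ssum (r u i : ℕ) : ℚ := ∑ k ∈ Finset.range i, ((r:ℚ)+1+k)^u

lemma Ssum_zero (r u : ℕ) : Ssum r u 0 = 0 := by simp [Ssum]

lemma Ssum_succ (r u i : ℕ) : Ssum r u (i+1) = Ssum r u i + ((r:ℚ)+1+i)^u := by
  simp [Ssum, Finset.sum_range_succ]

/-- Newton's identity for the elementary symmetric functions of `r+1, ..., r+i`. -/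
lemma newton (r : ℕ) : ∀ (i n : ℕ), ((n:ℚ)+1) * Ee r i (n+1)
    = ∑ u ∈ Finset.range (n+1), (-1:ℚ)^u * Ssum r (u+1) i * Ee r i (n-u) := by
  intro i
  induction i with
  | zero =>
    intro n
    have h1 : Ee r 0 (n+1) = 0 := rfl
    simp [h1, Ssum_zero]
  | succ i ih =>
    intro n
    set a : ℚ := (r:ℚ)+1+i with ha
    match n with
    | 0 =>
      have h0 : Ee r (i+1) 1 = Ee r i 1 + a * Ee r i 0 := rfl
      have h2 := ih 0
      simp only [Finset.sum_range_one, Nat.cast_zero, zero_add, Nat.sub_zero,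
        Ee_zero_right, mul_one, one_mul, pow_zero] at h2 ⊢
      rw [h0, Ssum_succ, ← h2]
      simp only [Ee_zero_right, mul_one, pow_one]
      try ring
    | (N+1) =>
      have hstep : ∀ u ∈ Finset.range (N+1+1),
          Ee r (i+1) (N+1-u) = Ee r i (N+1-u)
            + a * (if u ≤ N then Ee r i (N-u) else 0) := by
        intro u hu
        rw [Finset.mem_range] at hu
        by_cases h : u ≤ N
        · have h2 : N+1-u = (N-u)+1 := by omega
          rw [if_pos h, h2, Ee]
        · have hu' : u = N+1 := by omega
          subst hu'
          simp only [Nat.sub_self, if_neg h, mul_zero, add_zero]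
          show Ee r (i+1) 0 = Ee r i 0
          rw [Ee]
      have hEtop : Ee r (i+1) (N+1+1) = Ee r i (N+1+1) + a * Ee r i (N+1) := rfl
      have h1 : ∑ u ∈ Finset.range (N+1+1), (-1:ℚ)^u * Ssum r (u+1) (i+1) * Ee r (i+1) (N+1-u)
          = ∑ u ∈ Finset.range (N+1+1), ((-1:ℚ)^u * Ssum r (u+1) i * Ee r i (N+1-u)
            + a * ((-1:ℚ)^u * Ssum r (u+1) i * (if u ≤ N then Ee r i (N-u) else 0))
            + (-1:ℚ)^u * a^(u+1) * Ee r i (N+1-u)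
            + a * ((-1:ℚ)^u * a^(u+1) * (if u ≤ N then Ee r i (N-u) else 0))) :=
        Finset.sum_congr rfl (fun u hu => by rw [Ssum_succ, hstep u hu]; ring)
      have hB2 : ∑ u ∈ Finset.range (N+1+1),
            (-1:ℚ)^u * Ssum r (u+1) i * (if u ≤ N then Ee r i (N-u) else 0)
          = ∑ u ∈ Finset.range (N+1), (-1:ℚ)^u * Ssum r (u+1) i * Ee r i (N-u) := by
        rw [Finset.sum_range_succ, if_neg (by omega), mul_zero, add_zero]
        exact Finset.sum_congr rfl fun u hu =>
          by rw [if_pos (by have := Finset.mem_range.mp hu; omega)]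
      have hD4 : ∑ u ∈ Finset.range (N+1+1),
            (-1:ℚ)^u * a^(u+1) * (if u ≤ N then Ee r i (N-u) else 0)
          = ∑ u ∈ Finset.range (N+1), (-1:ℚ)^u * a^(u+1) * Ee r i (N-u) := by
        rw [Finset.sum_range_succ, if_neg (by omega), mul_zero, add_zero]
        exact Finset.sum_congr rfl fun u hu =>
          by rw [if_pos (by have := Finset.mem_range.mp hu; omega)]
      have hC : ∑ u ∈ Finset.range (N+1+1), (-1:ℚ)^u * a^(u+1) * Ee r i (N+1-u)
          = a * Ee r i (N+1)
            - a * ∑ u ∈ Finset.range (N+1), (-1:ℚ)^u * a^(u+1) * Ee r i (N-u) := by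
        rw [Finset.sum_range_succ']
        have hterm : ∀ u ∈ Finset.range (N+1),
            (-1:ℚ)^(u+1) * a^(u+1+1) * Ee r i (N+1-(u+1))
              = -(a * ((-1:ℚ)^u * a^(u+1) * Ee r i (N-u))) := by
          intro u hu
          have h3 : N+1-(u+1) = N-u := by omega
          rw [h3]; ring
        rw [Finset.sum_congr rfl hterm, Finset.sum_neg_distrib, ← Finset.mul_sum]
        simp only [Nat.sub_zero, pow_zero, one_mul, pow_one]
        ring
      rw [hEtop, h1, Finset.sum_add_distrib, Finset.sum_add_distrib, Finset.sum_add_distrib,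
        ← Finset.mul_sum, ← Finset.mul_sum, hB2, hD4, hC, ← ih (N+1), ← ih N]
      push_cast
      ring


lemma rS1_high (r' : ℕ) : ∀ m k, m < k → rStirling1 r' m k = 0 := by
  intro m
  induction m with
  | zero =>
    intro k hk
    rw [rStirling1, if_neg (by omega)]
  | succ m ih =>
    intro k hk
    rw [rStirling1]
    split_ifs with h1 h2 h3 h4
    · rfl
    · omega
    · rfl
    · omega
    · rw [ih (k-1) (by omega), ih k (by omega)]
      simp

lemma rS1_low (r : ℕ) : ∀ m k, k ≤ r → rStirling1 (r+1) m k = 0 := by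
  intro m
  induction m with
  | zero =>
    intro k hk
    rw [rStirling1, if_neg (by omega)]
  | succ m ih =>
    intro k hk
    rw [rStirling1]
    split_ifs with h1 h2 h3 h4
    · rfl
    · omega
    · rfl
    · rw [ih k hk, Nat.mul_zero]
    · rw [ih (k-1) (by omega), ih k hk, Nat.mul_zero]

lemma rS1_eq_Ee (r : ℕ) : ∀ i k, k ≤ i →
    (rStirling1 (r+1) (i+r+1) (k+r+1) : ℚ) = Ee r i (i-k) := by
  intro i
  induction i with
  | zero =>
    intro k hk
    have hk0 : k = 0 := by omega
    subst hk0
    have h0 : (0:ℕ)+r+1 = r+1 := by omega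
    rw [h0, rStirling1, if_neg (by omega), if_pos rfl, if_pos rfl]
    simp [Ee]
  | succ i ih =>
    intro k hk
    have harg : (i+1)+r+1 = (i+r+1)+1 := by omega
    rw [harg, rStirling1, if_neg (by omega), if_neg (by omega), if_neg (by omega)]
    have hk1 : k+r+1-1 = k+r := by omega
    rw [hk1, Nat.cast_add, Nat.cast_mul]
    rcases Nat.eq_zero_or_pos k with hk0 | hkpos
    · subst hk0
      have e1 : rStirling1 (r+1) (i+r+1) (0+r) = 0 := by
        rw [Nat.zero_add]; exact rS1_low r _ r le_rfl
      have e2 : (rStirling1 (r+1) (i+r+1) (0+r+1) : ℚ) = Ee r i i := by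
        have := ih 0 (Nat.zero_le i); simpa using this
      rw [e1, e2]
      have e3 : Ee r (i+1) (i+1-0) = Ee r i (i+1) + ((r:ℚ)+1+i) * Ee r i i := by
        rw [Nat.sub_zero]; rfl
      rw [e3, Ee_eq_zero r (Nat.lt_succ_self i)]
      push_cast
      ring
    · obtain ⟨k', rfl⟩ : ∃ k', k = k'+1 := ⟨k-1, by omega⟩
      have e1 : (rStirling1 (r+1) (i+r+1) (k'+1+r) : ℚ) = Ee r i (i-k') := by
        have hx : k'+1+r = k'+r+1 := by omega
        rw [hx]; exact ih k' (by omega)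
      rw [e1]
      by_cases hki : k' < i
      · have e2 : (rStirling1 (r+1) (i+r+1) (k'+1+r+1) : ℚ) = Ee r i (i-(k'+1)) :=
          ih (k'+1) (by omega)
        rw [e2]
        have e3 : Ee r (i+1) (i+1-(k'+1))
            = Ee r i (i-k') + ((r:ℚ)+1+i) * Ee r i (i-(k'+1)) := by
          have h3 : i+1-(k'+1) = (i-(k'+1))+1 := by omega
          rw [h3]
          show Ee r i ((i-(k'+1))+1) + ((r:ℚ)+1+i) * Ee r i (i-(k'+1)) = _
          have h4 : (i-(k'+1))+1 = i-k' := by omega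
          rw [h4]
        rw [e3]
        push_cast
        ring
      · have hki' : k' = i := by omega
        rw [hki']
        have e2 : rStirling1 (r+1) (i+r+1) (i+1+r+1) = 0 :=
          rS1_high (r+1) _ _ (by omega)
        rw [e2]
        have h3 : i+1-(i+1) = 0 := by omega
        have h4 : i - i = 0 := by omega
        rw [h3, h4]
        push_cast
        simp


noncomputable def Pp (r u : ℕ) : Polynomial ℚ :=
  Polynomial.C (1/((u:ℚ)+1)) *
    ((Polynomial.bernoulli (u+1)).comp (Polynomial.X + Polynomial.C ((r:ℚ)+1))
      - Polynomial.C ((Polynomial.bernoulli (u+1)).eval ((r:ℚ)+1)))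

lemma Pp_eval (r u : ℕ) : ∀ i : ℕ, (Pp r u).eval (i:ℚ) = Ssum r u i := by
  intro i
  induction i with
  | zero => simp [Pp, Ssum]
  | succ i ih =>
    have key : (Pp r u).eval ((i:ℚ)+1) = (Pp r u).eval (i:ℚ) + ((r:ℚ)+1+i)^u := by
      simp only [Pp, Polynomial.eval_mul, Polynomial.eval_C, Polynomial.eval_sub,
        Polynomial.eval_comp, Polynomial.eval_add, Polynomial.eval_X]
      have harg : (i:ℚ)+1 + ((r:ℚ)+1) = 1 + ((i:ℚ) + ((r:ℚ)+1)) := by ring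
      rw [harg, Polynomial.bernoulli_eval_one_add, Nat.add_sub_cancel]
      have hne : ((u:ℚ)+1) ≠ 0 := by positivity
      push_cast
      field_simp
      ring
    push_cast
    rw [key, ih, Ssum_succ]

lemma Pp_coeff_zero (r u : ℕ) : (Pp r u).coeff 0 = 0 := by
  rw [Polynomial.coeff_zero_eq_eval_zero]
  have := Pp_eval r u 0
  simpa [Ssum] using this

lemma Pp_coeff_one (r u : ℕ) :
    (Pp r u).coeff 1 = (Polynomial.bernoulli u).eval ((r:ℚ)+1) := by
  have hd : ((Polynomial.bernoulli (u+1)).comp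
        (Polynomial.X + Polynomial.C ((r:ℚ)+1))).coeff 1
      = ((u:ℚ)+1) * (Polynomial.bernoulli u).eval ((r:ℚ)+1) := by
    have h1 : ∀ p : Polynomial ℚ, p.coeff 1 = (Polynomial.derivative p).coeff 0 := by
      intro p; rw [Polynomial.coeff_derivative]; simp
    rw [h1, Polynomial.derivative_comp, Polynomial.derivative_bernoulli_add_one]
    simp [Polynomial.coeff_zero_eq_eval_zero, Polynomial.eval_comp]
  have hne : ((u:ℚ)+1) ≠ 0 := by positivity
  rw [Pp, Polynomial.coeff_C_mul, Polynomial.coeff_sub, hd, Polynomial.coeff_C]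
  simp
  field_simp

lemma bernoulli_natDegree_le (m : ℕ) : (Polynomial.bernoulli m).natDegree ≤ m := by
  rw [Polynomial.bernoulli]
  apply Polynomial.natDegree_sum_le_of_forall_le
  intro i hi
  exact le_trans (Polynomial.natDegree_monomial_le _) (by omega)

lemma Pp_natDegree_le (r u : ℕ) : (Pp r u).natDegree ≤ u+1 := by
  refine le_trans (Polynomial.natDegree_C_mul_le _ _) ?_
  refine le_trans (Polynomial.natDegree_sub_le _ _) ?_
  rw [max_le_iff]
  constructor
  · rw [Polynomial.natDegree_comp, Polynomial.natDegree_X_add_C, mul_one]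
    exact bernoulli_natDegree_le (u+1)
  · simp



lemma Ee_zero_col (r n : ℕ) : Ee r 0 (n+1) = 0 := rfl

noncomputable def Qq (r : ℕ) : ℕ → Polynomial ℚ
  | 0 => 1
  | (n+1) => Polynomial.C (1/((n:ℚ)+1)) *
      ∑ u ∈ Finset.range (n+1), (-1:ℚ)^u • (Pp r (u+1) * Qq r (n-u))
  decreasing_by exact Nat.lt_succ_of_le (Nat.sub_le n u)

lemma Qq_eval (r : ℕ) : ∀ n (i:ℕ), (Qq r n).eval (i:ℚ) = Ee r i n := by
  intro n
  induction n using Nat.strong_induction_on with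
  | _ n IH =>
    match n with
    | 0 => intro i; simp [Qq, Ee_zero_right]
    | (n+1) =>
      intro i
      rw [Qq]
      rw [Polynomial.eval_mul, Polynomial.eval_C, Polynomial.eval_finset_sum]
      have hterm : ∀ u ∈ Finset.range (n+1),
          ((-1:ℚ)^u • (Pp r (u+1) * Qq r (n-u))).eval (i:ℚ)
            = (-1:ℚ)^u * Ssum r (u+1) i * Ee r i (n-u) := by
        intro u hu
        rw [Polynomial.eval_smul, Polynomial.eval_mul, Pp_eval,
          IH (n-u) (Nat.lt_succ_of_le (Nat.sub_le n u))]
        simp [mul_assoc]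
      rw [Finset.sum_congr rfl hterm, ← newton r i n]
      have hne : ((n:ℚ)+1) ≠ 0 := by positivity
      field_simp
lemma Qq_coeff_zero (r n : ℕ) : (Qq r n).coeff 0 = if n = 0 then 1 else 0 := by
  rw [Polynomial.coeff_zero_eq_eval_zero]
  have h := Qq_eval r n 0
  rw [Nat.cast_zero] at h
  rw [h]
  match n with
  | 0 => simp [Ee_zero_right]
  | (m+1) => simp [Ee_zero_col]

lemma coeff_one_mul' (p q : Polynomial ℚ) :
    (p*q).coeff 1 = p.coeff 0 * q.coeff 1 + p.coeff 1 * q.coeff 0 := by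
  rw [Polynomial.coeff_mul, Finset.Nat.sum_antidiagonal_eq_sum_range_succ_mk]
  simp [Finset.sum_range_succ]

lemma Qq_coeff_one (r n : ℕ) : ((n:ℚ)+1) * (Qq r (n+1)).coeff 1
    = (-1:ℚ)^n * (Polynomial.bernoulli (n+1)).eval ((r:ℚ)+1) := by
  rw [Qq, Polynomial.coeff_C_mul, Polynomial.finset_sum_coeff]
  have hterm : ∀ u ∈ Finset.range (n+1),
      ((-1:ℚ)^u • (Pp r (u+1) * Qq r (n-u))).coeff 1
        = if u = n then (-1:ℚ)^n * (Polynomial.bernoulli (n+1)).eval ((r:ℚ)+1) else 0 := by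
    intro u hu
    rw [Polynomial.coeff_smul, coeff_one_mul', Pp_coeff_zero, Pp_coeff_one, Qq_coeff_zero]
    by_cases h : u = n
    · subst h
      rw [if_pos rfl, if_pos (Nat.sub_self u)]
      simp
    · rw [if_neg h, if_neg (by have := Finset.mem_range.mp hu; omega)]
      simp
  rw [Finset.sum_congr rfl hterm, Finset.sum_ite_eq' (Finset.range (n+1)) n]
  rw [if_pos (Finset.self_mem_range_succ n)]
  have hne : ((n:ℚ)+1) ≠ 0 := by positivity
  field_simp

lemma Qq_natDegree_le (r : ℕ) : ∀ n, (Qq r n).natDegree ≤ 2*n := by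
  intro n
  induction n using Nat.strong_induction_on with
  | _ n IH =>
    match n with
    | 0 => simp [Qq]
    | (n+1) =>
      rw [Qq]
      refine le_trans (Polynomial.natDegree_C_mul_le _ _) ?_
      apply Polynomial.natDegree_sum_le_of_forall_le
      intro u hu
      refine le_trans (Polynomial.natDegree_smul_le _ _) ?_
      refine le_trans (Polynomial.natDegree_mul_le) ?_
      have h1 := Pp_natDegree_le r (u+1)
      have h2 := IH (n-u) (Nat.lt_succ_of_le (Nat.sub_le n u))
      have := Finset.mem_range.mp hu
      omega


lemma comp_coeff (f : Polynomial ℚ) (d : ℕ) (hd : f.natDegree ≤ d) :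
    (f.comp (Polynomial.X + 1)).coeff d = f.coeff d := by
  rw [Polynomial.comp_eq_sum_left, Polynomial.sum_def, Polynomial.finset_sum_coeff]
  rw [Finset.sum_eq_single d]
  · rw [Polynomial.coeff_C_mul, Polynomial.coeff_X_add_one_pow, Nat.choose_self]; simp
  · intro e he hne
    rw [Polynomial.coeff_C_mul, Polynomial.coeff_X_add_one_pow]
    have hlt : e < d :=
      lt_of_le_of_ne (le_trans (Polynomial.le_natDegree_of_mem_supp e he) hd) hne
    rw [Nat.choose_eq_zero_of_lt hlt]; simp
  · intro hd'
    rw [Polynomial.notMem_support_iff] at hd'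
    rw [hd']; simp

lemma deg_drop (f : Polynomial ℚ) (m : ℕ) (h : f.degree < ((m+1 : ℕ) : WithBot ℕ)) :
    (f.comp (Polynomial.X + 1) - f).degree < ((m : ℕ) : WithBot ℕ) := by
  rw [Polynomial.degree_lt_iff_coeff_zero]
  intro d hd
  have hco := (Polynomial.degree_lt_iff_coeff_zero f (m+1)).mp h
  have hnd : f.natDegree ≤ d := by
    rw [Polynomial.natDegree_le_iff_coeff_eq_zero]
    intro e he
    exact hco e (by omega)
  rw [Polynomial.coeff_sub, comp_coeff f d hnd, sub_self]

lemma alt_sum_kill : ∀ (m : ℕ) (f : Polynomial ℚ), f.degree < ((m : ℕ) : WithBot ℕ) →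
    ∑ i ∈ Finset.range (m+1), (-1:ℚ)^i * (m.choose i : ℚ) * f.eval (i:ℚ) = 0 := by
  intro m
  induction m with
  | zero =>
    intro f hf
    have h0 : f = 0 := by
      rw [← Polynomial.degree_eq_bot, ← Nat.WithBot.lt_zero_iff]
      exact_mod_cast hf
    simp [h0]
  | succ m ih =>
    intro f hf
    set g : Polynomial ℚ := f.comp (Polynomial.X + 1) - f with hgdef
    have hg : g.degree < ((m : ℕ) : WithBot ℕ) := deg_drop f m hf
    have hgi : ∀ i : ℕ, g.eval (i:ℚ) = f.eval ((i:ℚ)+1) - f.eval (i:ℚ) := by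
      intro i; simp [hgdef, Polynomial.eval_comp]
    have e1 : ∑ i ∈ Finset.range (m+1+1), (-1:ℚ)^i * ((m+1).choose i : ℚ) * f.eval (i:ℚ)
        = ((∑ j ∈ Finset.range (m+1), (-1:ℚ)^(j+1) * (m.choose j : ℚ) * f.eval ((j:ℚ)+1))
          + (∑ j ∈ Finset.range (m+1),
              (-1:ℚ)^(j+1) * (m.choose (j+1) : ℚ) * f.eval ((j:ℚ)+1))) + f.eval 0 := by
      rw [Finset.sum_range_succ', ← Finset.sum_add_distrib]
      congr 1
      · apply Finset.sum_congr rfl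
        intro j hj
        rw [Nat.choose_succ_succ]
        push_cast
        ring
      · simp
    have e2 : (∑ j ∈ Finset.range (m+1),
          (-1:ℚ)^(j+1) * (m.choose (j+1) : ℚ) * f.eval ((j:ℚ)+1)) + f.eval 0
        = ∑ i ∈ Finset.range (m+1), (-1:ℚ)^i * (m.choose i : ℚ) * f.eval (i:ℚ) := by
      have hB1 : ∑ i ∈ Finset.range (m+1+1), (-1:ℚ)^i * (m.choose i : ℚ) * f.eval (i:ℚ)
          = (∑ j ∈ Finset.range (m+1),
              (-1:ℚ)^(j+1) * (m.choose (j+1) : ℚ) * f.eval ((j:ℚ)+1)) + f.eval 0 := by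
        rw [Finset.sum_range_succ']
        congr 1
        · apply Finset.sum_congr rfl
          intro j hj
          push_cast
          ring
        · simp
      have hB2 : ∑ i ∈ Finset.range (m+1+1), (-1:ℚ)^i * (m.choose i : ℚ) * f.eval (i:ℚ)
          = ∑ i ∈ Finset.range (m+1), (-1:ℚ)^i * (m.choose i : ℚ) * f.eval (i:ℚ) := by
        rw [Finset.sum_range_succ, Nat.choose_succ_self]
        simp
      rw [← hB1, hB2]
    have e3 : ∑ j ∈ Finset.range (m+1), (-1:ℚ)^(j+1) * (m.choose j : ℚ) * f.eval ((j:ℚ)+1)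
          + ∑ i ∈ Finset.range (m+1), (-1:ℚ)^i * (m.choose i : ℚ) * f.eval (i:ℚ)
        = -∑ i ∈ Finset.range (m+1), (-1:ℚ)^i * (m.choose i : ℚ) * g.eval (i:ℚ) := by
      rw [← Finset.sum_add_distrib, ← Finset.sum_neg_distrib]
      apply Finset.sum_congr rfl
      intro j hj
      rw [hgi j]
      ring
    rw [e1, add_assoc, e2, e3, ih g hg, neg_zero]

lemma bernoulli_reflect (n : ℕ) (hn : 1 ≤ n) : ∀ r : ℕ,
    (Polynomial.bernoulli n).eval ((r:ℚ)+1)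
      = (-1:ℚ)^n * (Polynomial.bernoulli n).eval (-(r:ℚ)) := by
  intro r
  induction r with
  | zero =>
    simp only [Nat.cast_zero, zero_add, neg_zero]
    rw [Polynomial.bernoulli_eval_one, Polynomial.bernoulli_eval_zero]
    rcases eq_or_ne n 1 with h1 | h1
    · subst h1; rw [bernoulli'_one, bernoulli_one]; norm_num
    · rw [bernoulli_eq_bernoulli'_of_ne_one h1]
      rcases Nat.even_or_odd n with he | ho
      · rw [he.neg_one_pow, one_mul]
      · have hz : bernoulli' n = 0 := bernoulli'_eq_zero_of_odd ho (by omega)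
        simp [hz]
  | succ r ihr =>
    obtain ⟨N, rfl⟩ : ∃ N, n = N+1 := ⟨n-1, by omega⟩
    push_cast
    have h1 : ((r:ℚ)+1)+1 = 1 + ((r:ℚ)+1) := by ring
    rw [h1, Polynomial.bernoulli_eval_one_add, ihr]
    have h2 := Polynomial.bernoulli_eval_one_add (N+1) (-((r:ℚ)+1))
    have h3 : 1 + (-((r:ℚ)+1)) = -(r:ℚ) := by ring
    rw [h3] at h2
    have h4 : (Polynomial.bernoulli (N+1)).eval (-((r:ℚ)+1))
        = (Polynomial.bernoulli (N+1)).eval (-(r:ℚ))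
          - ((N:ℚ)+1) * (-((r:ℚ)+1))^(N+1-1) := by
      rw [h2]; push_cast; ring
    rw [h4]
    rw [Nat.add_sub_cancel] at *
    have h5 : (-((r:ℚ)+1))^N = (-1:ℚ)^N * ((r:ℚ)+1)^N := by
      rw [← neg_one_mul, mul_pow]
    rw [h5]
    have hp : (-1:ℚ)^(N+1) * (-1:ℚ)^N = -1 := by
      rw [← pow_add]
      exact Odd.neg_one_pow ⟨N, by omega⟩
    push_cast
    linear_combination ((N:ℚ)+1) * ((r:ℚ)+1)^N * hp

end BPAux

open BPAux in
theorem bernoulli_poly_at_neg_nat_eq_sum_rStirling1 (n r : ℕ) (hn : 1 ≤ n) :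
    (Polynomial.bernoulli n).eval (-(r : ℚ)) =
      (n : ℚ) * ∑ j ∈ Finset.range (n + 1),
        ((-1 : ℚ) ^ (n + j) / (n + j)) * ((2 * n).choose (n + j)) *
          rStirling1 (r + 1) (n + r + j + 1) (r + j + 1) := by
  obtain ⟨N, rfl⟩ : ∃ N, n = N+1 := ⟨n-1, by omega⟩
  set R : Polynomial ℚ := (Qq r (N+1)).divX with hRdef
  have hc0 : (Qq r (N+1)).coeff 0 = 0 := by rw [Qq_coeff_zero]; simp
  have hXR : Polynomial.X * R = Qq r (N+1) := by
    have h := Polynomial.X_mul_divX_add (Qq r (N+1))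
    rwa [hc0, map_zero, add_zero] at h
  have heval : ∀ i : ℕ, (i:ℚ) * R.eval (i:ℚ) = Ee r i (N+1) := by
    intro i
    rw [← Qq_eval r (N+1) i, ← hXR, Polynomial.eval_mul, Polynomial.eval_X]
  have hR0 : R.eval 0 = (Qq r (N+1)).coeff 1 := by
    rw [← Polynomial.coeff_zero_eq_eval_zero, hRdef, Polynomial.coeff_divX]
  have hdeg : R.degree < ((2*(N+1) : ℕ) : WithBot ℕ) := by
    by_cases h0 : Qq r (N+1) = 0
    · rw [hRdef, h0]
      simp [Polynomial.divX_zero]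
      exact WithBot.bot_lt_coe _
    · refine lt_of_lt_of_le (Polynomial.degree_divX_lt h0) ?_
      exact Polynomial.natDegree_le_iff_degree_le.mp (Qq_natDegree_le r (N+1))
  have hkill := alt_sum_kill (2*(N+1)) R hdeg
  have hsplit : ∑ i ∈ Finset.range (2*(N+1)+1), (-1:ℚ)^i * (((2*(N+1)).choose i : ℕ):ℚ) * R.eval (i:ℚ)
      = (∑ i ∈ Finset.range (N+1), (-1:ℚ)^i * (((2*(N+1)).choose i : ℕ):ℚ) * R.eval (i:ℚ))
        + ∑ j ∈ Finset.range (N+1+1),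
            (-1:ℚ)^((N+1)+j) * (((2*(N+1)).choose ((N+1)+j) : ℕ):ℚ) * R.eval (((N+1)+j : ℕ):ℚ) := by
    rw [Finset.range_eq_Ico,
      ← Finset.sum_Ico_consecutive _ (by omega : 0 ≤ N+1) (by omega : N+1 ≤ 2*(N+1)+1)]
    congr 1
    · rw [Finset.range_eq_Ico]
    rw [Finset.sum_Ico_eq_sum_range]
    have h2 : 2*(N+1)+1-(N+1) = N+1+1 := by omega
    rw [h2, Finset.range_eq_Ico]
  have hfirst : ∑ i ∈ Finset.range (N+1), (-1:ℚ)^i * (((2*(N+1)).choose i : ℕ):ℚ) * R.eval (i:ℚ)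
      = R.eval 0 := by
    rw [Finset.sum_eq_single 0]
    · simp
    · intro i hi hne
      have h1 : Ee r i (N+1) = 0 := Ee_eq_zero r (Finset.mem_range.mp hi)
      have h2 : (i:ℚ) ≠ 0 := Nat.cast_ne_zero.mpr hne
      have h3 := heval i
      rw [h1] at h3
      have hRe : R.eval (i:ℚ) = 0 := (mul_eq_zero.mp h3).resolve_left h2
      rw [hRe, mul_zero]
    · intro h
      exact absurd (Finset.mem_range.mpr (by omega)) h
  rw [hsplit, hfirst, hR0] at hkill
  have hsum2 : ∑ j ∈ Finset.range (N+1+1),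
      (-1:ℚ)^((N+1)+j) * (((2*(N+1)).choose ((N+1)+j) : ℕ):ℚ) * R.eval (((N+1)+j : ℕ):ℚ)
      = -(Qq r (N+1)).coeff 1 := by linarith
  have hterm : ∀ j ∈ Finset.range (N+1+1),
      ((-1:ℚ)^((N+1)+j)/(((N+1:ℕ):ℚ)+(j:ℚ))) * (((2*(N+1)).choose ((N+1)+j) : ℕ):ℚ)
          * ((rStirling1 (r+1) ((N+1)+r+j+1) (r+j+1) : ℕ):ℚ)
      = (-1:ℚ)^((N+1)+j) * (((2*(N+1)).choose ((N+1)+j) : ℕ):ℚ) * R.eval (((N+1)+j : ℕ):ℚ) := by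
    intro j hj
    have hs : ((rStirling1 (r+1) ((N+1)+r+j+1) (r+j+1) : ℕ):ℚ) = Ee r ((N+1)+j) (N+1) := by
      have h1 : (N+1)+r+j+1 = ((N+1)+j)+r+1 := by omega
      have h2 : r+j+1 = j+r+1 := by omega
      rw [h1, h2, rS1_eq_Ee r ((N+1)+j) j (by omega)]
      congr 1
      omega
    rw [hs, ← heval ((N+1)+j)]
    have hmj : (((N+1)+j : ℕ):ℚ) = ((N+1:ℕ):ℚ)+(j:ℚ) := by push_cast; ring
    rw [hmj]
    have hne : ((N+1:ℕ):ℚ)+(j:ℚ) ≠ 0 := by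
      have h4 : (1:ℚ) ≤ ((N+1:ℕ):ℚ) := by exact_mod_cast (by omega : 1 ≤ N+1)
      have h5 : (0:ℚ) ≤ (j:ℚ) := Nat.cast_nonneg j
      intro hcon; linarith
    field_simp
  rw [Finset.sum_congr rfl hterm, hsum2]
  have hq := Qq_coeff_one r N
  have hrefl := bernoulli_reflect (N+1) (by omega) r
  have hsq : (-1:ℚ)^N * (-1:ℚ)^N = 1 := by
    rw [← pow_add]
    exact Even.neg_one_pow ⟨N, rfl⟩
  push_cast
  linear_combination hq + (-1:ℚ)^N * hrefl
    + (-(Polynomial.bernoulli (N+1)).eval (-(r:ℚ))) * hsq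
end
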